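/- The overpartition function satisfies the congruence p̄(5n+3) ≡ 0 (mod 4) for all n ≥ 0. -/

import Mathlib

open PowerSeries

/-- The infinite product `(q^a; q^b)_∞ = ∏_{n≥0} (1 - q^{a+bn})` as a formal power series:
its `d`-th coefficient is that of any sufficiently long finite truncation of the product. -/
noncomputable def qpoch (a b : ℕ) : PowerSeries ℚ :=
  PowerSeries.mk fun d =>
    PowerSeries.coeff (R := ℚ) d
      (∏ n ∈ Finset.range (d + 1), (1 - (X : PowerSeries ℚ) ^ (a + b * n)))

/-- `(q^a; q^b)_∞` viewed as a formal Laurent series. -/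
noncomputable def E (a b : ℕ) : LaurentSeries ℚ := (qpoch a b : LaurentSeries ℚ)

/-- `q` as a formal Laurent series. -/
noncomputable def Lq : LaurentSeries ℚ := ((X : PowerSeries ℚ) : LaurentSeries ℚ)

noncomputable section
namespace OP
open Polynomial Finset LaurentPolynomial

abbrev PS := PowerSeries ℤ
abbrev L := LaurentPolynomial ℤ

/-! ### coefficient congruence up to degree `d` -/

def Cong (d : ℕ) (f g : PS) : Prop := ∀ e ≤ d, PowerSeries.coeff (R := ℤ) e f = PowerSeries.coeff (R := ℤ) e g

lemma Cong.refl {d : ℕ} {f : PS} : Cong d f f := fun _ _ => _root_.rfl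

lemma cong_of_eq {d : ℕ} {f g : PS} (h : f = g) : Cong d f g := by subst h; exact Cong.refl

lemma Cong.symm {d : ℕ} {f g : PS} (h : Cong d f g) : Cong d g f := fun e he => (h e he).symm

lemma Cong.trans {d : ℕ} {f g h : PS} (h1 : Cong d f g) (h2 : Cong d g h) : Cong d f h :=
  fun e he => (h1 e he).trans (h2 e he)

lemma Cong.mul {d : ℕ} {f g f' g' : PS} (h : Cong d f g) (h' : Cong d f' g') :
    Cong d (f * f') (g * g') := by
  intro e he
  rw [PowerSeries.coeff_mul, PowerSeries.coeff_mul]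
  refine Finset.sum_congr rfl fun p hp => ?_
  have hpe : p.1 + p.2 = e := Finset.HasAntidiagonal.mem_antidiagonal.mp hp
  rw [h p.1 (le_trans (by omega) he), h' p.2 (le_trans (by omega) he)]

lemma Cong.cancel {d : ℕ} {A B U : PS} (hU : PowerSeries.constantCoeff (R := ℤ) U = 1)
    (h : Cong d (A * U) (B * U)) : Cong d A B := by
  have hu : U * PowerSeries.invOfUnit U 1 = 1 :=
    PowerSeries.mul_invOfUnit U 1 (by simp [hU])
  have h2 := h.mul (Cong.refl (f := PowerSeries.invOfUnit U 1))
  intro e he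
  have h1 := h2 e he
  rw [mul_assoc, hu, mul_one, mul_assoc, hu, mul_one] at h1
  exact h1

lemma cong_mul_one_sub_X_pow {d m : ℕ} (hm : d < m) (f : PS) :
    Cong d (f * (1 - PowerSeries.X ^ m)) f := by
  intro e he
  rw [mul_sub, mul_one, map_sub, PowerSeries.coeff_mul_X_pow', if_neg (by omega), sub_zero]

/-- `(q^a;q^b)_∞` over ℤ -/
def Z (a b : ℕ) : PS :=
  PowerSeries.mk fun d =>
    PowerSeries.coeff (R := ℤ) d (∏ n ∈ Finset.range (d + 1), (1 - (PowerSeries.X : PS) ^ (a + b * n)))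

lemma cong_prod_range {a b : ℕ} (ha : 1 ≤ a) (hb : 1 ≤ b) {d N M : ℕ} (hNM : N ≤ M)
    (hN : d < N) :
    Cong d (∏ n ∈ Finset.range M, (1 - (PowerSeries.X : PS) ^ (a + b * n)))
      (∏ n ∈ Finset.range N, (1 - (PowerSeries.X : PS) ^ (a + b * n))) := by
  induction M with
  | zero => omega
  | succ M ih =>
    rcases Nat.lt_or_ge N (M+1) with h | h
    · have hM : N ≤ M := by omega
      rw [Finset.prod_range_succ]
      exact (cong_mul_one_sub_X_pow (by nlinarith [Nat.one_le_iff_ne_zero.mp hb]) _).trans (ih hM)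
    · have : N = M + 1 := by omega
      subst this; exact Cong.refl

lemma cong_Z {a b : ℕ} (ha : 1 ≤ a) (hb : 1 ≤ b) {d N : ℕ} (hN : d < N) :
    Cong d (Z a b) (∏ n ∈ Finset.range N, (1 - (PowerSeries.X : PS) ^ (a + b * n))) := by
  intro e he
  have h1 : PowerSeries.coeff (R := ℤ) e (Z a b)
      = PowerSeries.coeff (R := ℤ) e (∏ n ∈ Finset.range (e + 1), (1 - (PowerSeries.X : PS) ^ (a + b * n))) := by
    simp [Z]
  rw [h1]
  exact ((cong_prod_range ha hb (show e+1 ≤ N by omega) (by omega)) e le_rfl).symm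

/-! ### Gaussian binomials and the finite q-binomial theorem -/

def gb2 : ℕ → ℕ → Polynomial ℤ
  | 0, 0 => 1
  | 0, _+1 => 0
  | m+1, 0 => gb2 m 0
  | m+1, r+1 => gb2 m (r+1) + Polynomial.X ^ (2*(m-r)) * gb2 m r

lemma gb2_zero_right (m : ℕ) : gb2 m 0 = 1 := by
  induction m with
  | zero => rfl
  | succ m ih => rw [gb2, ih]

lemma gb2_eq_zero : ∀ {m r : ℕ}, m < r → gb2 m r = 0
  | 0, r+1, _ => rfl
  | m+1, r+1, h => by
    rw [gb2, gb2_eq_zero (by omega), gb2_eq_zero (by omega), mul_zero, add_zero]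

lemma gb2_self (m : ℕ) : gb2 m m = 1 := by
  induction m with
  | zero => rfl
  | succ m ih => rw [gb2, gb2_eq_zero (by omega), ih, zero_add, Nat.sub_self, mul_zero, pow_zero,
      one_mul]

/-- The finite `q`-binomial theorem (with `q ↦ q²`), in `ℤ[q][w]`. -/
lemma QBT2 (m : ℕ) :
    (∏ j ∈ Finset.range m, (Polynomial.C ((Polynomial.X : Polynomial ℤ) ^ (2*j)) * Polynomial.X + 1))
      = ∑ r ∈ Finset.range (m+1),
          Polynomial.C ((Polynomial.X : Polynomial ℤ) ^ (r*(r-1)) * gb2 m r) * Polynomial.X ^ r := by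
  induction m with
  | zero => simp [gb2_zero_right]
  | succ m ih =>
    rw [Finset.prod_range_succ, ih,
      Finset.sum_range_succ'
        (fun r => Polynomial.C ((Polynomial.X : Polynomial ℤ) ^ (r*(r-1)) * gb2 (m+1) r) * Polynomial.X ^ r)]
    simp only [Nat.add_sub_cancel]
    have key : ∀ r ∈ Finset.range (m+1),
        Polynomial.C ((Polynomial.X:Polynomial ℤ)^((r+1)*r) * gb2 (m+1) (r+1)) * Polynomial.X^(r+1)
        = Polynomial.C ((Polynomial.X:Polynomial ℤ)^((r+1)*r) * gb2 m (r+1)) * Polynomial.X^(r+1)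
          + (Polynomial.C ((Polynomial.X:Polynomial ℤ)^(r*(r-1)) * gb2 m r) * Polynomial.X^r)
            * (Polynomial.C ((Polynomial.X:Polynomial ℤ)^(2*m)) * Polynomial.X) := by
      intro r _
      have hgb : gb2 (m+1) (r+1) = gb2 m (r+1) + Polynomial.X ^ (2*(m-r)) * gb2 m r := rfl
      rw [hgb, mul_add, map_add, add_mul]
      congr 1
      rcases le_or_gt r m with h | h
      · have he : (r+1)*r + 2*(m-r) = r*(r-1) + 2*m := by
          obtain ⟨k, rfl⟩ := Nat.exists_eq_add_of_le h
          cases r with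
          | zero => simp
          | succ s =>
            simp only [Nat.succ_sub_one, Nat.add_sub_cancel_left]
            ring_nf
        have hx : (Polynomial.X:Polynomial ℤ)^((r+1)*r) * (Polynomial.X ^ (2*(m-r)) * gb2 m r)
            = Polynomial.X^(r*(r-1)) * gb2 m r * Polynomial.X^(2*m) := by
          rw [← mul_assoc, ← pow_add, he, pow_add]; ring
        rw [hx, map_mul, map_mul]
        ring
      · rw [gb2_eq_zero h]
        simp
    rw [Finset.sum_congr rfl key, Finset.sum_add_distrib, mul_add, mul_one, Finset.sum_mul]
    have h1 : (∑ r ∈ Finset.range (m+1),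
          Polynomial.C ((Polynomial.X:Polynomial ℤ)^((r+1)*r) * gb2 m (r+1)) * Polynomial.X^(r+1))
        + Polynomial.C ((Polynomial.X:Polynomial ℤ)^(0*(0-1)) * gb2 (m+1) 0) * Polynomial.X^0
        = ∑ r ∈ Finset.range (m+1), Polynomial.C ((Polynomial.X:Polynomial ℤ)^(r*(r-1)) * gb2 m r) * Polynomial.X^r := by
      rw [Finset.sum_range_succ'
          (fun r => Polynomial.C ((Polynomial.X:Polynomial ℤ)^(r*(r-1)) * gb2 m r) * Polynomial.X^r),
        Finset.sum_range_succ]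
      simp only [Nat.add_sub_cancel]
      rw [gb2_eq_zero (show m < m+1 by omega)]
      have h2 : gb2 (m+1) 0 = gb2 m 0 := rfl
      rw [h2]
      simp
    rw [← h1]
    ring

/-! ### Gaussian binomial times q-Pochhammer products -/

/-- finite product `(q²;q²)_s` -/
def Pd (s : ℕ) : Polynomial ℤ := ∏ i ∈ Finset.range s, (1 - Polynomial.X ^ (2*(i+1)))

lemma GBP : ∀ m r : ℕ, r ≤ m → gb2 m r * Pd r * Pd (m - r) = Pd m := by
  intro m
  induction m with
  | zero =>
    intro r hr
    interval_cases r
    simp [gb2_zero_right, Pd]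
  | succ m ih =>
    intro r hr
    match r with
    | 0 => simp [gb2_zero_right, Pd]
    | r+1 =>
      simp only [Nat.add_sub_add_right]
      rcases eq_or_lt_of_le hr with h | h
      · have hrm : r = m := by omega
        subst hrm
        rw [gb2_self, Nat.sub_self]
        simp [Pd]
      · have h1 : r + 1 ≤ m := by omega
        have hgb : gb2 (m+1) (r+1) = gb2 m (r+1) + Polynomial.X ^ (2*(m-r)) * gb2 m r := rfl
        have e1' : Pd (m-r) = Pd (m-(r+1)) * (1 - Polynomial.X^(2*(m-r))) := by
          have h2 : m - r = (m - (r+1)) + 1 := by omega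
          rw [h2, Pd, Pd, Finset.prod_range_succ]
        have e3 : Pd (r+1) = Pd r * (1 - Polynomial.X^(2*(r+1))) := by
          rw [Pd, Pd, Finset.prod_range_succ]
        have e2 : Pd (m+1) = Pd m * (1 - Polynomial.X^(2*(m+1))) := by
          rw [Pd, Pd, Finset.prod_range_succ]
        have i1 := ih (r+1) h1
        have i2 := ih r (by omega)
        have hexp : (Polynomial.X:Polynomial ℤ)^(2*(m-r)) * Polynomial.X^(2*(r+1)) = Polynomial.X^(2*(m+1)) := by
          rw [← pow_add]; congr 1; omega
        linear_combination (Pd (r+1) * Pd (m-r)) * hgb + (gb2 m (r+1) * Pd (r+1)) * e1'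
          + (Polynomial.X^(2*(m-r)) * gb2 m r * Pd (m-r)) * e3 + (1 - Polynomial.X^(2*(m-r))) * i1
          + (Polynomial.X^(2*(m-r)) * (1 - Polynomial.X^(2*(r+1)))) * i2 - e2 - Pd m * hexp

/-! ### the triple-product-type identity at z = -1, via Laurent polynomials -/

lemma prodT (n : ℕ) (g : ℕ → ℤ) :
    ∏ j ∈ Finset.range n, (T (g j) : L) = T (∑ j ∈ Finset.range n, g j) := by
  induction n with
  | zero => simp
  | succ n ih => rw [Finset.prod_range_succ, Finset.sum_range_succ, T_add, ih]

lemma sum_odd (n : ℕ) : (∑ j ∈ Finset.range n, (2*(j:ℤ)+1)) = (n:ℤ)^2 := by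
  induction n with
  | zero => simp
  | succ n ih => rw [Finset.sum_range_succ, ih]; push_cast; ring

lemma JTP_L (n : ℕ) :
    (∏ i ∈ Finset.range n, (1 - T (2*(i:ℤ)+1) : L))^2
      = ∑ r ∈ Finset.range (2*n+1),
          (-1)^(n+r) * Polynomial.toLaurent (gb2 (2*n) r) * T (((r:ℤ) - (n:ℤ))^2) := by
  classical
  set Φ := Polynomial.eval₂RingHom (Polynomial.toLaurent (R := ℤ)) (-T (1 - 2*(n:ℤ))) with hΦ
  have hQ := congrArg Φ (QBT2 (2*n))
  rw [map_prod, map_sum] at hQ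
  have hL : ∏ j ∈ Finset.range (2*n),
        Φ (Polynomial.C ((Polynomial.X : Polynomial ℤ)^(2*j)) * Polynomial.X + 1)
      = ∏ j ∈ Finset.range (2*n), ((1:L) - T (2*(j:ℤ)+1-2*(n:ℤ))) := by
    refine Finset.prod_congr rfl fun j _ => ?_
    rw [hΦ]
    simp only [Polynomial.coe_eval₂RingHom, Polynomial.eval₂_add, Polynomial.eval₂_mul,
      Polynomial.eval₂_C, Polynomial.eval₂_X, Polynomial.eval₂_one]
    rw [Polynomial.toLaurent_X_pow, mul_neg, ← T_add]
    have he : ((2*j : ℕ) : ℤ) + (1 - 2*(n:ℤ)) = 2*(j:ℤ)+1-2*(n:ℤ) := by push_cast; ring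
    rw [he]; ring
  have hR : ∑ r ∈ Finset.range (2*n+1),
        Φ (Polynomial.C ((Polynomial.X : Polynomial ℤ)^(r*(r-1)) * gb2 (2*n) r) * Polynomial.X ^ r)
      = ∑ r ∈ Finset.range (2*n+1),
          (-1)^r * Polynomial.toLaurent (gb2 (2*n) r)
            * T ((r:ℤ)*((r:ℤ)-1) + (r:ℤ)*(1 - 2*(n:ℤ))) := by
    refine Finset.sum_congr rfl fun r _ => ?_
    rw [hΦ]
    simp only [Polynomial.coe_eval₂RingHom, Polynomial.eval₂_mul, Polynomial.eval₂_C,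
      Polynomial.eval₂_X_pow, map_mul]
    rw [Polynomial.toLaurent_X_pow, neg_pow, T_pow]
    have hc : ((r*(r-1) : ℕ) : ℤ) = (r:ℤ)*((r:ℤ)-1) := by
      cases r with
      | zero => simp
      | succ s => push_cast [Nat.succ_sub_one]; ring
    calc T ((r*(r-1) : ℕ) : ℤ) * Polynomial.toLaurent (gb2 (2*n) r)
          * ((-1)^r * T ((r:ℤ) * (1 - 2*(n:ℤ))))
        = (-1)^r * Polynomial.toLaurent (gb2 (2*n) r)
          * (T ((r*(r-1) : ℕ) : ℤ) * T ((r:ℤ) * (1 - 2*(n:ℤ)))) := by ring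
      _ = _ := by rw [← T_add, hc]
  rw [hL, hR] at hQ
  have key : (∏ i ∈ Finset.range n, (1 - T (2*(i:ℤ)+1) : L))^2
      = ((-1)^n * T ((n:ℤ)^2)) * ∏ j ∈ Finset.range (2*n), ((1:L) - T (2*(j:ℤ)+1-2*(n:ℤ))) := by
    rw [two_mul, Finset.prod_range_add]
    have hsecond : ∏ j ∈ Finset.range n, ((1 : L) - T (2*((n + j : ℕ):ℤ)+1-2*(n:ℤ)))
        = ∏ i ∈ Finset.range n, (1 - T (2*(i:ℤ)+1) : L) := by
      refine Finset.prod_congr rfl fun j _ => ?_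
      congr 2
      push_cast; ring
    have hfirst : ∏ j ∈ Finset.range n, ((1:L) - T (2*(j:ℤ)+1-2*(n:ℤ)))
        = ∏ j ∈ Finset.range n, ((1:L) - T (-(2*(j:ℤ)+1))) := by
      rw [← Finset.prod_range_reflect (fun j => ((1:L) - T (2*(j:ℤ)+1-2*(n:ℤ)))) n]
      refine Finset.prod_congr rfl fun j hj => ?_
      have hj' : j < n := Finset.mem_range.mp hj
      congr 2
      have hc : ((n - 1 - j : ℕ) : ℤ) = (n:ℤ) - 1 - (j:ℤ) := by omega
      rw [hc]; ring
    rw [hsecond, hfirst]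
    have hneg : ((-1:L))^n * T ((n:ℤ)^2) = ∏ j ∈ Finset.range n, (-(T (2*(j:ℤ)+1)) : L) := by
      rw [show (∏ j ∈ Finset.range n, (-(T (2*(j:ℤ)+1)) : L))
          = ∏ j ∈ Finset.range n, ((-1 : L) * T (2*(j:ℤ)+1)) from
          Finset.prod_congr rfl (fun j _ => by ring),
        Finset.prod_mul_distrib, Finset.prod_const, prodT, sum_odd, Finset.card_range]
    have hfac : ∀ a : ℤ, (-(T a) : L) * (1 - T (-a)) = 1 - T a := by
      intro a
      rw [mul_sub, mul_one, neg_mul, ← T_add, add_neg_cancel, T_zero]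
      ring
    rw [hneg]
    have h3 : (∏ j ∈ Finset.range n, (-(T (2*(j:ℤ)+1)) : L))
        * ∏ j ∈ Finset.range n, ((1:L) - T (-(2*(j:ℤ)+1)))
        = ∏ i ∈ Finset.range n, ((1:L) - T (2*(i:ℤ)+1)) := by
      rw [← Finset.prod_mul_distrib]
      exact Finset.prod_congr rfl fun j _ => hfac _
    rw [← mul_assoc, h3, sq]
  rw [key, hQ, Finset.mul_sum]
  refine Finset.sum_congr rfl fun r _ => ?_
  calc ((-1:L))^n * T ((n:ℤ)^2)
        * ((-1)^r * Polynomial.toLaurent (gb2 (2*n) r)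
            * T ((r:ℤ)*((r:ℤ)-1) + (r:ℤ)*(1 - 2*(n:ℤ))))
      = (-1)^(n+r) * Polynomial.toLaurent (gb2 (2*n) r)
        * (T ((n:ℤ)^2) * T ((r:ℤ)*((r:ℤ)-1) + (r:ℤ)*(1 - 2*(n:ℤ)))) := by
        rw [pow_add]; ring
    _ = _ := by rw [← T_add]; congr 2; ring

def Qd (n : ℕ) : Polynomial ℤ := ∏ i ∈ Finset.range n, (1 - Polynomial.X ^ (2*i+1))

lemma JTP (n : ℕ) :
    Qd n ^ 2 = ∑ r ∈ Finset.range (2*n+1),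
      (-1)^(n+r) * gb2 (2*n) r * Polynomial.X ^ (((r:ℤ) - (n:ℤ))^2).toNat := by
  apply Polynomial.toLaurent_injective
  rw [map_pow, map_sum]
  have h1 : Polynomial.toLaurent (Qd n) = ∏ i ∈ Finset.range n, (1 - T (2*(i:ℤ)+1) : L) := by
    rw [Qd, map_prod]
    refine Finset.prod_congr rfl fun i _ => ?_
    rw [map_sub, Polynomial.toLaurent_one, Polynomial.toLaurent_X_pow]
    norm_cast
  rw [h1, JTP_L]
  refine Finset.sum_congr rfl fun r _ => ?_
  rw [map_mul, map_mul, map_pow, map_neg, Polynomial.toLaurent_one, Polynomial.toLaurent_X_pow]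
  congr 2
  rw [Int.toNat_of_nonneg (sq_nonneg _)]

/-! ### transfer to power series over ℤ -/

abbrev toPS : Polynomial ℤ →+* PS := Polynomial.coeToPowerSeries.ringHom

def PP (s : ℕ) : PS := ∏ i ∈ Finset.range s, (1 - (PowerSeries.X : PS)^(2+2*i))
def QQ (n : ℕ) : PS := ∏ i ∈ Finset.range n, (1 - (PowerSeries.X : PS)^(1+2*i))
def G2 (m r : ℕ) : PS := toPS (gb2 m r)

lemma toPS_X_pow (k : ℕ) : toPS (Polynomial.X ^ k) = (PowerSeries.X : PS)^k := by
  rw [map_pow]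
  congr 1
  rw [Polynomial.coeToPowerSeries.ringHom_apply, Polynomial.coe_X]

lemma toPS_Pd (s : ℕ) : toPS (Pd s) = PP s := by
  rw [Pd, PP, map_prod]
  refine Finset.prod_congr rfl fun i _ => ?_
  rw [map_sub, map_one, show (2*(i+1)) = 2+2*i by ring, toPS_X_pow]

lemma toPS_Qd (n : ℕ) : toPS (Qd n) = QQ n := by
  rw [Qd, QQ, map_prod]
  refine Finset.prod_congr rfl fun i _ => ?_
  rw [map_sub, map_one, show (2*i+1) = 1+2*i by ring, toPS_X_pow]

lemma GBP_PS {m r : ℕ} (h : r ≤ m) : G2 m r * PP r * PP (m - r) = PP m := by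
  have h2 := congrArg toPS (GBP m r h)
  rw [map_mul, map_mul, toPS_Pd, toPS_Pd, toPS_Pd] at h2
  exact h2

lemma JTP_PS (n : ℕ) :
    QQ n ^ 2 = ∑ r ∈ Finset.range (2*n+1),
      PowerSeries.C (R := ℤ) ((-1)^(n+r)) * G2 (2*n) r
        * (PowerSeries.X : PS) ^ (((r:ℤ) - (n:ℤ))^2).toNat := by
  have h2 := congrArg toPS (JTP n)
  rw [map_pow, map_sum, toPS_Qd] at h2
  rw [h2]
  refine Finset.sum_congr rfl fun r _ => ?_
  rw [map_mul, map_mul, toPS_X_pow]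
  congr 2
  rw [map_pow, map_neg, map_one, map_pow, map_neg, map_one]

lemma constPP (s : ℕ) : PowerSeries.constantCoeff (R := ℤ) (PP s) = 1 := by
  rw [PP, map_prod]
  refine Finset.prod_eq_one fun i _ => ?_
  rw [map_sub, map_one, map_pow, PowerSeries.constantCoeff_X, zero_pow (by omega), sub_zero]

lemma cong_Z12 {d n : ℕ} (h : d < n) : Cong d (Z 1 2) (QQ n) := by
  unfold QQ
  exact cong_Z (by norm_num) (by norm_num) h

lemma cong_Z22 {d n : ℕ} (h : d < n) : Cong d (Z 2 2) (PP n) := by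
  unfold PP
  exact cong_Z (by norm_num) (by norm_num) h

lemma cong_PP {d s t : ℕ} (hs : d < s) (ht : d < t) : Cong d (PP s) (PP t) :=
  (cong_Z22 hs).symm.trans (cong_Z22 ht)

lemma stab {d n r : ℕ} (hr : r ≤ 2*n) (h1 : d < r) (h2 : d < 2*n - r) (h3 : d < n) :
    Cong d (G2 (2*n) r * PP n) 1 := by
  have hGBP := GBP_PS hr
  have c1 : Cong d (G2 (2*n) r * PP n * PP n) (G2 (2*n) r * PP r * PP (2*n - r)) :=
    (Cong.mul (Cong.mul Cong.refl (cong_PP h3 h1)) (cong_PP h3 h2))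
  have c2 : Cong d (PP (2*n)) (PP n) := cong_PP (by omega) h3
  have key : Cong d ((G2 (2*n) r * PP n) * PP n) (1 * PP n) :=
    (c1.trans ((cong_of_eq hGBP).trans c2)).trans (cong_of_eq (one_mul _).symm)
  exact Cong.cancel (constPP n) key

/-! ### the theta side -/

def ψ : ℕ → ℤ := fun d =>
  if d = 0 then 1 else if Nat.sqrt d * Nat.sqrt d = d then 2 * (-1)^(Nat.sqrt d) else 0

def Psi : PS := PowerSeries.mk ψ

lemma neg_one_pow_nsub {n k : ℕ} (h : k ≤ n) : ((-1 : ℤ))^(n + (n - k)) = (-1)^k := by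
  have hk : ((-1:ℤ))^k * (-1)^k = 1 := by
    rw [← pow_add]
    exact Even.neg_one_pow ⟨k, rfl⟩
  have h2 : ((-1:ℤ))^(n+(n-k)) * (-1)^k = 1 := by
    rw [← pow_add, show n + (n-k) + k = n + n by omega]
    exact Even.neg_one_pow ⟨n, rfl⟩
  calc ((-1:ℤ))^(n+(n-k)) = ((-1:ℤ))^(n+(n-k)) * (((-1:ℤ))^k * (-1)^k) := by rw [hk, mul_one]
    _ = (((-1:ℤ))^(n+(n-k)) * (-1)^k) * (-1)^k := by ring
    _ = (-1)^k := by rw [h2, one_mul]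

lemma neg_one_pow_nadd (n k : ℕ) : ((-1 : ℤ))^(n + (n + k)) = (-1)^k := by
  rw [show n + (n + k) = (n + n) + k by omega, pow_add, Even.neg_one_pow ⟨n, rfl⟩, one_mul]

lemma gauss_core : Z 1 2 ^ 2 * Z 2 2 = Psi := by
  ext d
  have hψc : PowerSeries.coeff (R := ℤ) d Psi = ψ d := by rw [Psi, PowerSeries.coeff_mk]
  rw [hψc]
  set n := 2*d + 2 with hn
  have hdn : d < n := by omega
  have hc : PowerSeries.coeff (R := ℤ) d (Z 1 2 ^ 2 * Z 2 2)
      = PowerSeries.coeff (R := ℤ) d (QQ n ^ 2 * PP n) := by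
    have c := (Cong.mul (Cong.mul (cong_Z12 hdn) (cong_Z12 hdn)) (cong_Z22 hdn))
    have e1 : Z 1 2 ^2 * Z 2 2 = Z 1 2 * Z 1 2 * Z 2 2 := by ring
    have e2 : QQ n ^2 * PP n = QQ n * QQ n * PP n := by ring
    rw [e1, e2]
    exact c d le_rfl
  rw [hc, JTP_PS, Finset.sum_mul, map_sum]
  have hterm : ∀ r ∈ Finset.range (2*n+1),
      PowerSeries.coeff (R := ℤ) d
        (PowerSeries.C (R := ℤ) ((-1)^(n+r)) * G2 (2*n) r
          * (PowerSeries.X : PS) ^ (((r:ℤ) - (n:ℤ))^2).toNat * PP n)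
      = if ((r:ℤ)-(n:ℤ))^2 = (d:ℤ) then (-1)^(n+r) else 0 := by
    intro r hr
    have hmem : r < 2*n+1 := Finset.mem_range.mp hr
    set e := (((r:ℤ) - (n:ℤ))^2).toNat with he
    have hee : ((e : ℤ)) = ((r:ℤ) - (n:ℤ))^2 := Int.toNat_of_nonneg (sq_nonneg _)
    have hre : PowerSeries.C (R := ℤ) ((-1)^(n+r)) * G2 (2*n) r * (PowerSeries.X : PS) ^ e * PP n
        = PowerSeries.C (R := ℤ) ((-1)^(n+r)) * ((PowerSeries.X : PS) ^ e * (G2 (2*n) r * PP n)) := by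
      ring
    rw [hre, PowerSeries.coeff_C_mul, PowerSeries.coeff_X_pow_mul']
    by_cases hed : e ≤ d
    · have hsql : ((r:ℤ) - (n:ℤ))^2 ≤ (d:ℤ) := by
        rw [← hee]; exact_mod_cast hed
      have hup : (r:ℤ) - (n:ℤ) ≤ (d:ℤ) := by nlinarith [sq_nonneg ((r:ℤ) - (n:ℤ) - 1)]
      have hlo : (n:ℤ) - (r:ℤ) ≤ (d:ℤ) := by nlinarith [sq_nonneg ((r:ℤ) - (n:ℤ) + 1)]
      have hst := stab (show r ≤ 2*n by omega) (show d < r by omega) (show d < 2*n - r by omega) hdn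
      rw [if_pos hed, hst (d - e) (by omega), PowerSeries.coeff_one]
      by_cases heq : e = d
      · rw [if_pos (by omega), if_pos (by rw [← hee, heq]), mul_one]
      · have hcon' : ¬ ((r:ℤ)-(n:ℤ))^2 = (d:ℤ) := fun hcon => heq (by
          have h9 : (e:ℤ) = (d:ℤ) := by rw [hee, hcon]
          omega)
        rw [if_neg (by omega), if_neg hcon', mul_zero]
    · rw [if_neg hed, mul_zero, if_neg (fun hcon => hed (by
        have : (e:ℤ) = (d:ℤ) := by rw [hee, hcon]
        omega))]
  rw [Finset.sum_congr rfl hterm, ← Finset.sum_filter]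
  by_cases hd0 : d = 0
  · subst hd0
    have hfil : (Finset.range (2*n+1)).filter (fun r : ℕ => ((r:ℤ)-(n:ℤ))^2 = ((0:ℕ):ℤ)) = {n} := by
      ext r
      simp only [Finset.mem_filter, Finset.mem_range, Finset.mem_singleton]
      constructor
      · rintro ⟨h1, h2⟩
        have h2' : ((r:ℤ)-(n:ℤ))^2 = 0 := by rw [h2]; norm_num
        have h3 : (r:ℤ) - (n:ℤ) = 0 := sq_eq_zero_iff.mp h2'
        omega
      · rintro rfl
        refine ⟨by omega, by simp⟩
    rw [hfil, Finset.sum_singleton, show ψ 0 = 1 from rfl]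
    exact Even.neg_one_pow ⟨n, rfl⟩
  · by_cases hsq : Nat.sqrt d * Nat.sqrt d = d
    · set k := Nat.sqrt d with hk
      have hk1 : 1 ≤ k := by
        rcases Nat.eq_zero_or_pos k with h | h
        · rw [h] at hsq; omega
        · exact h
      have hkd : k ≤ d := by nlinarith
      have hkz : ((k:ℤ))*(k:ℤ) = (d:ℤ) := by exact_mod_cast hsq
      have hfil : (Finset.range (2*n+1)).filter (fun r : ℕ => ((r:ℤ)-(n:ℤ))^2 = (d:ℤ))
          = {n - k, n + k} := by
        ext r
        simp only [Finset.mem_filter, Finset.mem_range, Finset.mem_insert, Finset.mem_singleton]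
        constructor
        · rintro ⟨h1, h2⟩
          have h0 : (((r:ℤ)-(n:ℤ)) - k) * (((r:ℤ)-(n:ℤ)) + k) = 0 := by
            linear_combination h2 - hkz
          rcases mul_eq_zero.mp h0 with h | h
          · right; omega
          · left; omega
        · rintro (rfl | rfl)
          · refine ⟨by omega, ?_⟩
            have hcast : ((n - k : ℕ) : ℤ) = (n:ℤ) - (k:ℤ) := by omega
            rw [hcast]
            linear_combination hkz
          · refine ⟨by omega, ?_⟩
            push_cast
            linear_combination hkz
      rw [hfil]
      have hne2 : n - k ≠ n + k := by omega
      rw [Finset.sum_pair hne2, neg_one_pow_nsub (show k ≤ n by omega), neg_one_pow_nadd]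
      simp only [ψ]
      rw [if_neg hd0, if_pos hsq]
      ring
    · have hfil : (Finset.range (2*n+1)).filter (fun r : ℕ => ((r:ℤ)-(n:ℤ))^2 = (d:ℤ))
          = ∅ := by
        ext r
        simp only [Finset.mem_filter, Finset.mem_range, Finset.notMem_empty, iff_false,
          not_and]
        intro h1 h2
        apply hsq
        have h3 : ((((r:ℤ)-(n:ℤ)).natAbs * ((r:ℤ)-(n:ℤ)).natAbs : ℕ) : ℤ)
            = ((r:ℤ)-(n:ℤ))^2 := by
          rw [sq]; exact Int.natAbs_mul_self
        have h4 : ((r:ℤ)-(n:ℤ)).natAbs * ((r:ℤ)-(n:ℤ)).natAbs = d := by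
          exact_mod_cast h3.trans h2
        rw [← h4, Nat.sqrt_eq, h4]
      rw [hfil, Finset.sum_empty]
      simp only [ψ]
      rw [if_neg hd0, if_neg hsq]

/-! ### odd/even split and Gauss identity -/

lemma split_prod (N : ℕ) : (∏ m ∈ Finset.range (2*N), (1 - (PowerSeries.X:PS)^(1+m)))
    = (∏ i ∈ Finset.range N, (1-(PowerSeries.X:PS)^(1+2*i)))
      * ∏ i ∈ Finset.range N, (1-(PowerSeries.X:PS)^(2+2*i)) := by
  induction N with
  | zero => simp
  | succ N ih =>
    rw [show 2*(N+1) = (2*N) + 1 + 1 by ring, Finset.prod_range_succ, Finset.prod_range_succ,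
      ih, Finset.prod_range_succ, Finset.prod_range_succ,
      show 1 + (2*N+1) = 2 + 2*N by omega]
    ring

lemma Z_split : Z 1 1 = Z 1 2 * Z 2 2 := by
  ext d
  have c0 : Cong d (Z 1 1) (∏ m ∈ Finset.range (2*(d+1)), (1 - (PowerSeries.X:PS)^(1+1*m))) :=
    cong_Z le_rfl le_rfl (by omega)
  have c0' : (∏ m ∈ Finset.range (2*(d+1)), (1 - (PowerSeries.X:PS)^(1+1*m)))
      = ∏ m ∈ Finset.range (2*(d+1)), (1 - (PowerSeries.X:PS)^(1+m)) := by
    simp only [one_mul]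
  have c1 : Cong d (Z 1 2 * Z 2 2)
      ((∏ i ∈ Finset.range (d+1), (1-(PowerSeries.X:PS)^(1+2*i)))
        * ∏ i ∈ Finset.range (d+1), (1-(PowerSeries.X:PS)^(2+2*i))) :=
    (cong_Z (by norm_num) (by norm_num) (by omega)).mul
      (cong_Z (by norm_num) (by norm_num) (by omega))
  rw [c0 d le_rfl, c0', split_prod, ← c1 d le_rfl]

lemma gauss : Z 1 1 ^ 2 = Psi * Z 2 2 := by
  have h := gauss_core
  have hs := Z_split
  linear_combination (Z 1 1 + Z 1 2 * Z 2 2) * hs + (Z 2 2) * h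

end OP
end

namespace OP

lemma constZ22 : PowerSeries.constantCoeff (R := ℤ) (Z 2 2) = 1 := by
  have h : PowerSeries.constantCoeff (R := ℤ) (Z 2 2) = PowerSeries.coeff (R := ℤ) 0 (Z 2 2) := by
    rw [PowerSeries.coeff_zero_eq_constantCoeff]
  rw [h, Z, PowerSeries.coeff_mk, Finset.prod_range_one]
  simp

lemma map_Z (a b : ℕ) : PowerSeries.map (Int.castRingHom ℚ) (Z a b) = qpoch a b := by
  ext d
  rw [PowerSeries.coeff_map, Z, PowerSeries.coeff_mk, qpoch, PowerSeries.coeff_mk]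
  have h : PowerSeries.map (Int.castRingHom ℚ)
      (∏ n ∈ Finset.range (d+1), (1 - (PowerSeries.X : PS)^(a+b*n)))
      = ∏ n ∈ Finset.range (d+1), (1 - (PowerSeries.X : PowerSeries ℚ)^(a+b*n)) := by
    rw [map_prod]
    refine Finset.prod_congr rfl fun i _ => ?_
    rw [map_sub, map_one, map_pow, PowerSeries.map_X]
  rw [← h, PowerSeries.coeff_map]

end OP

theorem overpartition_five_n_three_mod_four (pbar : ℕ → ℤ)
    (hgen : ((PowerSeries.mk (fun n => (pbar n : ℚ)) : PowerSeries ℚ) : LaurentSeries ℚ)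
      = E 2 2 / E 1 1 ^ 2) :
    ∀ n : ℕ, (4 : ℤ) ∣ pbar (5 * n + 3) := by
  intro n0
  -- Step 1: identity of rational power series
  have hc1 : PowerSeries.constantCoeff (R := ℚ) (qpoch 1 1) = 1 := by
    have h : PowerSeries.constantCoeff (R := ℚ) (qpoch 1 1) = PowerSeries.coeff (R := ℚ) 0 (qpoch 1 1) := by
      rw [PowerSeries.coeff_zero_eq_constantCoeff]
    rw [h, qpoch, PowerSeries.coeff_mk, Finset.prod_range_one]
    simp
  have hne : E 1 1 ≠ 0 := by
    rw [E]
    intro h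
    have h0 : qpoch 1 1 = 0 := HahnSeries.ofPowerSeries_injective (Γ := ℤ) (R := ℚ)
      (by rw [map_zero]; exact h)
    rw [h0, map_zero] at hc1
    exact one_ne_zero hc1.symm
  have h2 : ((PowerSeries.mk (fun n => (pbar n : ℚ)) : PowerSeries ℚ) : LaurentSeries ℚ)
      * (E 1 1) ^ 2 = ((qpoch 2 2 : PowerSeries ℚ) : LaurentSeries ℚ) := by
    rw [hgen]
    have : E 2 2 = ((qpoch 2 2 : PowerSeries ℚ) : LaurentSeries ℚ) := rfl
    rw [← this]
    exact div_mul_cancel₀ _ (pow_ne_zero _ hne)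
  have hq1 : (PowerSeries.mk (fun n => (pbar n : ℚ))) * qpoch 1 1 ^ 2 = qpoch 2 2 := by
    apply HahnSeries.ofPowerSeries_injective (Γ := ℤ) (R := ℚ)
    rw [E] at h2
    rw [← PowerSeries.coe_pow, ← PowerSeries.coe_mul] at h2
    exact h2
  -- Step 2: down to ℤ
  have hmk : PowerSeries.map (Int.castRingHom ℚ) (PowerSeries.mk pbar)
      = PowerSeries.mk (fun n => (pbar n : ℚ)) := by
    ext d
    rw [PowerSeries.coeff_map, PowerSeries.coeff_mk, PowerSeries.coeff_mk]
    rfl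
  have hinj : Function.Injective
      ((PowerSeries.map (Int.castRingHom ℚ)) : PowerSeries ℤ → PowerSeries ℚ) := by
    intro f g h
    ext d
    have := congrArg (PowerSeries.coeff (R := ℚ) d) h
    rw [PowerSeries.coeff_map, PowerSeries.coeff_map, Int.coe_castRingHom] at this
    exact Int.cast_injective this
  have hZint : PowerSeries.mk pbar * OP.Z 1 1 ^ 2 = OP.Z 2 2 := by
    apply hinj
    rw [map_mul, map_pow, OP.map_Z, OP.map_Z, hmk]
    exact hq1
  -- Step 3: cancel (q²;q²)∞, using Gauss's identity
  have hzne : OP.Z 2 2 ≠ 0 := by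
    intro h
    have := OP.constZ22
    rw [h, map_zero] at this
    exact one_ne_zero this.symm
  have hψ1 : PowerSeries.mk pbar * OP.Psi = 1 := by
    have h5 : (PowerSeries.mk pbar * OP.Psi) * OP.Z 2 2 = 1 * OP.Z 2 2 := by
      rw [one_mul]
      calc (PowerSeries.mk pbar * OP.Psi) * OP.Z 2 2
          = PowerSeries.mk pbar * (OP.Psi * OP.Z 2 2) := by ring
        _ = PowerSeries.mk pbar * OP.Z 1 1 ^ 2 := by rw [← OP.gauss]
        _ = OP.Z 2 2 := hZint
    exact mul_right_cancel₀ hzne h5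
  -- Step 4: reduce mod 4
  have h6 : PowerSeries.map (Int.castRingHom (ZMod 4)) (PowerSeries.mk pbar)
      * PowerSeries.map (Int.castRingHom (ZMod 4)) OP.Psi = 1 := by
    rw [← map_mul, hψ1, map_one]
  set S : PowerSeries (ZMod 4) := PowerSeries.mk
    (fun d => if d ≠ 0 ∧ Nat.sqrt d * Nat.sqrt d = d then (1 : ZMod 4) else 0) with hSdef
  have hS : PowerSeries.map (Int.castRingHom (ZMod 4)) OP.Psi
      = 1 + PowerSeries.C (R := (ZMod 4)) 2 * S := by
    ext d
    rw [PowerSeries.coeff_map, map_add, PowerSeries.coeff_C_mul]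
    rw [show PowerSeries.coeff (R := ℤ) d OP.Psi = OP.ψ d from by rw [OP.Psi, PowerSeries.coeff_mk]]
    rw [hSdef, PowerSeries.coeff_mk, PowerSeries.coeff_one, OP.ψ]
    by_cases hd0 : d = 0
    · subst hd0
      rw [if_pos rfl, if_pos rfl, if_neg (by simp)]
      norm_num
    · rw [if_neg hd0, if_neg hd0]
      by_cases hsq : Nat.sqrt d * Nat.sqrt d = d
      · rw [if_pos hsq, if_pos ⟨hd0, hsq⟩]
        push_cast
        rcases Nat.even_or_odd (Nat.sqrt d) with h | h
        · rw [h.neg_one_pow]; norm_num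
        · rw [h.neg_one_pow]; decide
      · rw [if_neg hsq, if_neg (by tauto)]
        norm_num
  have hPsisq : (PowerSeries.map (Int.castRingHom (ZMod 4)) OP.Psi)
      * (PowerSeries.map (Int.castRingHom (ZMod 4)) OP.Psi) = 1 := by
    rw [hS]
    have hc : (PowerSeries.C (R := (ZMod 4)) 2) * (PowerSeries.C (R := (ZMod 4)) 2) = 0 := by
      rw [← map_mul, show ((2*2 : ZMod 4)) = 0 from rfl, map_zero]
    have hcc : (PowerSeries.C (R := (ZMod 4)) 2) + (PowerSeries.C (R := (ZMod 4)) 2) = 0 := by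
      rw [← map_add, show ((2+2 : ZMod 4)) = 0 from rfl, map_zero]
    linear_combination (S*S) * hc + S * hcc
  have hP : PowerSeries.map (Int.castRingHom (ZMod 4)) (PowerSeries.mk pbar)
      = PowerSeries.map (Int.castRingHom (ZMod 4)) OP.Psi := by
    calc PowerSeries.map (Int.castRingHom (ZMod 4)) (PowerSeries.mk pbar)
        = PowerSeries.map (Int.castRingHom (ZMod 4)) (PowerSeries.mk pbar)
          * ((PowerSeries.map (Int.castRingHom (ZMod 4)) OP.Psi)
            * (PowerSeries.map (Int.castRingHom (ZMod 4)) OP.Psi)) := by rw [hPsisq, mul_one]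
      _ = (PowerSeries.map (Int.castRingHom (ZMod 4)) (PowerSeries.mk pbar)
          * PowerSeries.map (Int.castRingHom (ZMod 4)) OP.Psi)
          * PowerSeries.map (Int.castRingHom (ZMod 4)) OP.Psi := by ring
      _ = _ := by rw [h6, one_mul]
  -- Step 5: extract the coefficient
  have h7 := congrArg (PowerSeries.coeff (R := (ZMod 4)) (5*n0+3)) hP
  rw [PowerSeries.coeff_map, PowerSeries.coeff_map, PowerSeries.coeff_mk,
    show PowerSeries.coeff (R := ℤ) (5*n0+3) OP.Psi = OP.ψ (5*n0+3) from by
      rw [OP.Psi, PowerSeries.coeff_mk]] at h7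
  have hns : ¬ (Nat.sqrt (5*n0+3) * Nat.sqrt (5*n0+3) = 5*n0+3) := by
    intro hsq
    set k := Nat.sqrt (5*n0+3) with hk
    have h8 : k * k % 5 = (k%5) * (k%5) % 5 := Nat.mul_mod k k 5
    rw [hsq] at h8
    have h9 : k % 5 = 0 ∨ k % 5 = 1 ∨ k % 5 = 2 ∨ k % 5 = 3 ∨ k % 5 = 4 := by omega
    rcases h9 with h|h|h|h|h <;> rw [h] at h8 <;> omega
  have hψ0 : OP.ψ (5*n0+3) = 0 := by
    rw [OP.ψ]
    rw [if_neg (by omega), if_neg hns]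
  rw [hψ0] at h7
  have h10 : ((pbar (5*n0+3) : ℤ) : ZMod 4) = 0 := by
    rw [show (((pbar (5*n0+3) : ℤ)) : ZMod 4) = (Int.castRingHom (ZMod 4)) (pbar (5*n0+3)) from rfl,
      h7, map_zero]
  exact (ZMod.intCast_zmod_eq_zero_iff_dvd _ 4).mp h10
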